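/- Let {U_j : j ∈ J} be a finite collection of nonempty closed convex polyhedra in ℝ^d whose intersection ⋂_j U_j is empty. Then there exists ε₀ > 0 such that for all 0 < ε ≤ ε₀, the intersection of thickenings ⋂_j B(U_j, ε) is empty, where B(T, ε) = {u : inf_{t∈T} ‖u − t‖ < ε}. -/

import Mathlib

open Finset

section ConeLemmas

variable {E : Type*} [NormedAddCommGroup E] [NormedSpace ℝ E]

lemma cone_carath_aux {ι : Type*} [Fintype ι] [DecidableEq ι] (v : ι → E) :
    ∀ (n : ℕ) (s : Finset ι) (y : ι → ℝ), s.card ≤ n → (∀ i, 0 ≤ y i) →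
      (∀ i ∉ s, y i = 0) →
      ∃ (t : Finset ι) (c : ι → ℝ), LinearIndependent ℝ (fun i : t => v i) ∧
        (∀ i, 0 ≤ c i) ∧ (∀ i ∉ t, c i = 0) ∧
        ∑ i, c i • v i = ∑ i, y i • v i := by
  intro n
  induction n with
  | zero =>
    intro s y hcard hy hsupp
    have hs : s = ∅ := Finset.card_eq_zero.mp (Nat.le_zero.mp hcard)
    haveI : IsEmpty { x // x ∈ (∅ : Finset ι) } := ⟨fun x => (Finset.notMem_empty _ x.2)⟩
    refine ⟨∅, fun _ => 0, linearIndependent_empty_type, fun _ => le_refl _,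
      fun _ _ => rfl, ?_⟩
    have hy0 : ∀ i, y i = 0 := fun i => hsupp i (by simp [hs])
    simp [hy0]
  | succ n ih =>
    intro s y hcard hy hsupp
    by_cases hli : LinearIndependent ℝ (fun i : s => v i)
    · exact ⟨s, y, hli, hy, hsupp, rfl⟩
    · obtain ⟨g, hg0, i₁, hgi₁⟩ := Fintype.not_linearIndependent_iff.mp hli
      have hext : ∀ (g : { x // x ∈ s } → ℝ),
          ∑ i, (fun i => if h : i ∈ s then g ⟨i, h⟩ else 0) i • v i
            = ∑ i : s, g i • v (i : ι) := by
        intro g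
        calc ∑ i, (fun i => if h : i ∈ s then g ⟨i, h⟩ else 0) i • v i
            = ∑ i ∈ s, (fun i => if h : i ∈ s then g ⟨i, h⟩ else 0) i • v i :=
              (Finset.sum_subset (Finset.subset_univ s)
                (fun i _ hi => by simp [dif_neg hi])).symm
          _ = ∑ i ∈ s.attach, (fun i => if h : i ∈ s then g ⟨i, h⟩ else 0) (i : ι) • v (i : ι) :=
              (Finset.sum_attach s _).symm
          _ = ∑ i : s, g i • v (i : ι) := by
              rw [Finset.univ_eq_attach]
              exact Finset.sum_congr rfl fun i _ => by simp [i.2]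
      have hrel : ∃ lam : ι → ℝ, (∀ i ∉ s, lam i = 0) ∧ (∑ i, lam i • v i = 0) ∧
          ∃ i ∈ s, 0 < lam i := by
        rcases lt_or_ge 0 (g i₁) with hpos | hle
        · exact ⟨fun i => if h : i ∈ s then g ⟨i, h⟩ else 0,
            fun i hi => dif_neg hi, by rw [hext]; exact hg0,
            i₁.1, i₁.2, by simpa [i₁.2] using hpos⟩
        · have hneg : 0 < -(g i₁) := by
            rcases lt_or_eq_of_le hle with h | h
            · linarith
            · exact absurd h hgi₁
          refine ⟨fun i => if h : i ∈ s then -(g ⟨i, h⟩) else 0,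
            fun i hi => dif_neg hi, ?_, i₁.1, i₁.2, by simpa [i₁.2] using hneg⟩
          rw [hext (fun i => -(g i))]
          simp only [neg_smul, Finset.sum_neg_distrib, hg0, neg_zero]
      obtain ⟨lam, hlam0, hlamsum, iw, hiw, hiwpos⟩ := hrel
      set P : Finset ι := s.filter (fun i => 0 < lam i) with hP
      have hPne : P.Nonempty := ⟨iw, Finset.mem_filter.mpr ⟨hiw, hiwpos⟩⟩
      obtain ⟨i₀, hi₀P, hi₀min⟩ := Finset.exists_min_image P (fun i => y i / lam i) hPne
      have hi₀s : i₀ ∈ s := (Finset.mem_filter.mp hi₀P).1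
      have hlami₀ : 0 < lam i₀ := (Finset.mem_filter.mp hi₀P).2
      set t₀ : ℝ := y i₀ / lam i₀ with ht₀
      have ht₀0 : 0 ≤ t₀ := div_nonneg (hy i₀) hlami₀.le
      set y' : ι → ℝ := fun i => y i - t₀ * lam i with hy'
      have hy'0 : ∀ i, 0 ≤ y' i := by
        intro i
        rcases le_or_gt (lam i) 0 with h | h
        · have h2 : t₀ * lam i ≤ 0 := mul_nonpos_of_nonneg_of_nonpos ht₀0 h
          have h3 : y' i = y i - t₀ * lam i := rfl
          linarith [hy i]
        · have his : i ∈ s := by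
            by_contra hc
            rw [hlam0 i hc] at h; exact lt_irrefl _ h
          have hiP : i ∈ P := Finset.mem_filter.mpr ⟨his, h⟩
          have h1 : t₀ * lam i ≤ y i := (le_div_iff₀ h).mp (hi₀min i hiP)
          have h3 : y' i = y i - t₀ * lam i := rfl
          linarith
      have hy'supp : ∀ i ∉ s.erase i₀, y' i = 0 := by
        intro i hi
        have h3 : y' i = y i - t₀ * lam i := rfl
        by_cases his : i ∈ s
        · have heq : i = i₀ := by
            by_contra hne
            exact hi (Finset.mem_erase.mpr ⟨hne, his⟩)
          subst heq
          have h4 : t₀ * lam i = y i := by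
            rw [ht₀]; exact div_mul_cancel₀ (y i) hlami₀.ne'
          linarith
        · rw [h3, hsupp i his, hlam0 i his]; ring
      have hsum' : ∑ i, y' i • v i = ∑ i, y i • v i := by
        have hterm : ∀ i, y' i • v i = y i • v i - t₀ • (lam i • v i) := fun i => by
          show (y i - t₀ * lam i) • v i = _
          rw [sub_smul, mul_smul]
        rw [Finset.sum_congr rfl fun i _ => hterm i, Finset.sum_sub_distrib,
          ← Finset.smul_sum, hlamsum, smul_zero, sub_zero]
      have hcard' : (s.erase i₀).card ≤ n := by
        rw [Finset.card_erase_of_mem hi₀s]; omega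
      obtain ⟨t, c, h1, h2, h3, h4⟩ := ih (s.erase i₀) y' hcard' hy'0 hy'supp
      exact ⟨t, c, h1, h2, h3, h4.trans hsum'⟩

lemma cone_isClosed {ι : Type*} [Fintype ι] [DecidableEq ι] [FiniteDimensional ℝ E]
    (v : ι → E) :
    IsClosed {x : E | ∃ c : ι → ℝ, (∀ i, 0 ≤ c i) ∧ x = ∑ i, c i • v i} := by
  have hdecomp : {x : E | ∃ c : ι → ℝ, (∀ i, 0 ≤ c i) ∧ x = ∑ i, c i • v i} =
      ⋃ (s : Finset ι), ⋃ (_ : LinearIndependent ℝ fun i : s => v (i : ι)),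
        {x : E | ∃ c : ι → ℝ, (∀ i, 0 ≤ c i) ∧ (∀ i ∉ s, c i = 0) ∧ x = ∑ i, c i • v i} := by
    ext x
    simp only [Set.mem_setOf_eq, Set.mem_iUnion]
    constructor
    · rintro ⟨c, hc0, rfl⟩
      obtain ⟨t, c', h1, h2, h3, h4⟩ :=
        cone_carath_aux v (Finset.univ.card) Finset.univ c (le_refl _) hc0 (by simp)
      exact ⟨t, h1, c', h2, h3, h4.symm⟩
    · rintro ⟨s, _, c, hc0, _, rfl⟩
      exact ⟨c, hc0, rfl⟩
  rw [hdecomp]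
  apply isClosed_iUnion_of_finite
  intro s
  haveI := Classical.dec (LinearIndependent ℝ fun i : s => v (i : ι))
  rw [Set.iUnion_eq_if]
  split_ifs with hs
  · -- the image of the nonnegative orthant under an injective linear map
    let L : ({ x // x ∈ s } → ℝ) →ₗ[ℝ] E :=
      { toFun := fun c => ∑ i : s, c i • v (i : ι)
        map_add' := fun c c' => by simp [add_smul, Finset.sum_add_distrib]
        map_smul' := fun r c => by simp [mul_smul, Finset.smul_sum] }
    have hLinj : LinearMap.ker L = ⊥ := by
      rw [LinearMap.ker_eq_bot']
      intro c hc
      have := Fintype.linearIndependent_iff.mp hs c hc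
      funext i; exact this i
    have hemb := LinearMap.isClosedEmbedding_of_injective hLinj
    have horth : IsClosed {c : { x // x ∈ s } → ℝ | ∀ i, 0 ≤ c i} := by
      have : {c : { x // x ∈ s } → ℝ | ∀ i, 0 ≤ c i} = ⋂ i, {c | 0 ≤ c i} :=
        by ext c; simp
      rw [this]
      exact isClosed_iInter fun i => isClosed_le continuous_const (continuous_apply i)
    have himg : {x : E | ∃ c : ι → ℝ, (∀ i, 0 ≤ c i) ∧ (∀ i ∉ s, c i = 0) ∧
        x = ∑ i, c i • v i} = L '' {c | ∀ i, 0 ≤ c i} := by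
      ext x
      simp only [Set.mem_setOf_eq, Set.mem_image]
      constructor
      · rintro ⟨c, hc0, hcsupp, rfl⟩
        refine ⟨fun i => c i, fun i => hc0 i, ?_⟩
        show ∑ i : s, c (i : ι) • v (i : ι) = _
        rw [Finset.univ_eq_attach, Finset.sum_attach s (fun i => c i • v i)]
        exact Finset.sum_subset (Finset.subset_univ s)
          (fun i _ hi => by rw [hcsupp i hi, zero_smul])
      · rintro ⟨c, hc0, rfl⟩
        refine ⟨fun i => if h : i ∈ s then c ⟨i, h⟩ else 0,
          fun i => by by_cases h : i ∈ s <;> simp [h, hc0], fun i hi => dif_neg hi, ?_⟩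
        show (∑ i : s, c i • v (i : ι))
            = ∑ i : ι, (if h : i ∈ s then c ⟨i, h⟩ else 0) • v i
        calc ∑ i : s, c i • v (i : ι)
            = ∑ i ∈ s.attach, (if h : (i : ι) ∈ s then c ⟨i, h⟩ else 0) • v (i : ι) := by
              rw [Finset.univ_eq_attach]
              exact Finset.sum_congr rfl fun i _ => by simp [i.2]
          _ = ∑ i ∈ s, (if h : i ∈ s then c ⟨i, h⟩ else 0) • v i :=
              Finset.sum_attach s (fun i => (if h : i ∈ s then c ⟨i, h⟩ else 0) • v i)
          _ = ∑ i : ι, (if h : i ∈ s then c ⟨i, h⟩ else 0) • v i :=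
              Finset.sum_subset (Finset.subset_univ s)
                (fun i _ hi => by simp [dif_neg hi])
    rw [himg]
    exact hemb.isClosedMap _ horth
  · exact isClosed_empty

lemma cone_convex {ι : Type*} [Fintype ι] (v : ι → E) :
    Convex ℝ {x : E | ∃ c : ι → ℝ, (∀ i, 0 ≤ c i) ∧ x = ∑ i, c i • v i} := by
  rintro x ⟨c, hc0, rfl⟩ x' ⟨c', hc'0, rfl⟩ α β hα hβ hαβ
  refine ⟨fun i => α * c i + β * c' i,
    fun i => add_nonneg (mul_nonneg hα (hc0 i)) (mul_nonneg hβ (hc'0 i)), ?_⟩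
  rw [Finset.smul_sum, Finset.smul_sum, ← Finset.sum_add_distrib]
  exact Finset.sum_congr rfl fun i _ => by
    rw [add_smul, mul_smul, mul_smul]

end ConeLemmas

/-- Farkas' lemma: an infeasible finite linear inequality system admits a nonnegative
combination of its rows equal to `0 ≤ negative`. -/
lemma farkas_infeasible {d : ℕ} {ι : Type*} [Fintype ι] [DecidableEq ι]
    (a : ι → Fin d → ℝ) (b : ι → ℝ)
    (h : {x : Fin d → ℝ | ∀ i, (∑ k, a i k * x k) ≤ b i} = ∅) :
    ∃ y : ι → ℝ, (∀ i, 0 ≤ y i) ∧ (∀ k, ∑ i, y i * a i k = 0) ∧ ∑ i, y i * b i < 0 := by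
  classical
  set v : ι → (Fin d → ℝ) × ℝ := fun i => (a i, b i) with hv
  set K : Set ((Fin d → ℝ) × ℝ) := {x | ∃ c : ι → ℝ, (∀ i, 0 ≤ c i) ∧ x = ∑ i, c i • v i}
    with hK
  by_cases hp : (((0 : Fin d → ℝ), (-1 : ℝ)) : (Fin d → ℝ) × ℝ) ∈ K
  · obtain ⟨y, hy, hsum⟩ := hp
    refine ⟨y, hy, ?_, ?_⟩
    · intro k
      have h1 := congrFun (congrArg Prod.fst hsum) k
      simp only [Prod.fst_sum] at h1
      rw [Finset.sum_apply] at h1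
      simp only [hv, Prod.smul_mk, Pi.smul_apply, smul_eq_mul] at h1
      exact h1.symm
    · have h2 := congrArg Prod.snd hsum
      simp only [Prod.snd_sum] at h2
      simp only [hv, Prod.smul_mk, smul_eq_mul] at h2
      rw [← h2]; norm_num
  · exfalso
    obtain ⟨f, u, hfK, hfp⟩ :=
      geometric_hahn_banach_closed_point (cone_convex v) (cone_isClosed v) hp
    have h0K : (0 : (Fin d → ℝ) × ℝ) ∈ K := ⟨fun _ => 0, fun _ => le_refl _, by simp⟩
    have hu : 0 < u := by simpa using hfK 0 h0K
    have hvi : ∀ i, f (v i) ≤ 0 := by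
      intro i
      by_contra hc
      push_neg at hc
      set t : ℝ := (u + 1) / f (v i) with ht
      have ht0 : 0 ≤ t := div_nonneg (by linarith) hc.le
      have hmem : t • v i ∈ K := by
        refine ⟨fun j => if j = i then t else 0,
          fun j => by by_cases hj : j = i <;> simp [hj, ht0], ?_⟩
        simp [ite_smul]
      have := hfK _ hmem
      rw [map_smul, smul_eq_mul, ht, div_mul_cancel₀ _ (ne_of_gt hc)] at this
      linarith
    -- coordinate representation of f
    set e : Fin d → (Fin d → ℝ) := fun k => fun j => if k = j then 1 else 0 with he
    set cvec : Fin d → ℝ := fun k => f (e k, (0 : ℝ)) with hcvec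
    set γ : ℝ := f ((0 : Fin d → ℝ), (1 : ℝ)) with hγ
    have hrep : ∀ (x : Fin d → ℝ) (t : ℝ),
        f (x, t) = (∑ k, x k * cvec k) + t * γ := by
      intro x t
      have hx := pi_eq_sum_univ x
      have hxt : ((x, t) : (Fin d → ℝ) × ℝ) =
          (∑ k, x k • (((e k : Fin d → ℝ), (0 : ℝ)) : (Fin d → ℝ) × ℝ))
            + t • (((0 : Fin d → ℝ), (1 : ℝ)) : (Fin d → ℝ) × ℝ) := by
        rw [Prod.ext_iff]
        constructor
        · simp only [Prod.fst_add, Prod.fst_sum, Prod.smul_mk, smul_zero, add_zero]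
          exact hx
        · simp [Prod.snd_sum]
      rw [hxt, map_add, map_sum, map_smul, smul_eq_mul]
      congr 1
      exact Finset.sum_congr rfl fun k _ => by rw [map_smul, smul_eq_mul]
    have hγneg : γ < 0 := by
      have := hfp
      rw [hrep] at this
      simp at this
      linarith
    set xhat : Fin d → ℝ := fun k => cvec k / (-γ) with hxhat
    have hfeas : ∀ i, (∑ k, a i k * xhat k) ≤ b i := by
      intro i
      have h3 := hvi i
      rw [hv] at h3
      rw [hrep (a i) (b i)] at h3
      have hγpos : 0 < -γ := by linarith
      have h4 : ∑ k, a i k * xhat k = (∑ k, a i k * cvec k) / (-γ) := by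
        rw [Finset.sum_div]
        exact Finset.sum_congr rfl fun k _ => by
          show a i k * (cvec k / (-γ)) = _
          rw [mul_div_assoc]
      rw [h4, div_le_iff₀ hγpos]
      have h5 : b i * -γ = -(b i * γ) := by ring
      linarith
    rw [Set.eq_empty_iff_forall_notMem] at h
    exact h xhat hfeas

/-- Disjointness of finitely many nonempty closed convex polyhedra is preserved under
sufficiently small uniform thickening. -/
theorem stmt9 {d : ℕ} {J : Type*} [Fintype J] (U : J → Set (Fin d → ℝ))
    (hpoly : ∀ j, ∃ (m : ℕ) (a : Fin m → (Fin d → ℝ)) (b : Fin m → ℝ),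
      U j = {x | ∀ i, (∑ k, a i k * x k) ≤ b i})
    (hne : ∀ j, (U j).Nonempty)
    (hempty : (⋂ j, U j) = ∅) :
    ∃ ε₀ : ℝ, 0 < ε₀ ∧ ∀ ε : ℝ, 0 < ε → ε ≤ ε₀ →
      (⋂ j, {u : Fin d → ℝ | Metric.infDist u (U j) < ε}) = ∅ := by
  classical
  choose m a b hU using hpoly
  set ι := (j : J) × Fin (m j) with hι
  set A : ι → Fin d → ℝ := fun p => a p.1 p.2 with hA
  set B : ι → ℝ := fun p => b p.1 p.2 with hB
  have hinf : {x : Fin d → ℝ | ∀ p : ι, (∑ k, A p k * x k) ≤ B p} = ∅ := by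
    rw [Set.eq_empty_iff_forall_notMem]
    intro x hx
    have hxmem : x ∈ ⋂ j, U j := Set.mem_iInter.2 fun j => by
      rw [hU j]; exact fun i => hx ⟨j, i⟩
    rw [hempty] at hxmem
    exact hxmem
  obtain ⟨y, hy0, hker, hneg⟩ := farkas_infeasible A B hinf
  set S : ℝ := ∑ p, y p * B p with hS
  set C : ℝ := ∑ p, y p * (∑ k, |A p k|) with hC
  have hC0 : 0 ≤ C :=
    Finset.sum_nonneg fun p _ =>
      mul_nonneg (hy0 p) (Finset.sum_nonneg fun k _ => abs_nonneg _)
  refine ⟨-S / (2 * (C + 1)), div_pos (by linarith) (by linarith), ?_⟩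
  intro ε hε hεle
  rw [Set.eq_empty_iff_forall_notMem]
  intro u hu
  rw [Set.mem_iInter] at hu
  have hu' : ∀ j, Metric.infDist u (U j) < ε := fun j => hu j
  choose z hzU hzd using fun j => (Metric.infDist_lt_iff (hne j)).1 (hu' j)
  have key : ∀ p : ι, (∑ k, A p k * u k) ≤ B p + (∑ k, |A p k|) * ε := by
    intro p
    have hz1 : ∑ k, A p k * z p.1 k ≤ B p := by
      have := hzU p.1
      rw [hU p.1] at this
      exact this p.2
    have hz2 : ∑ k, A p k * (u k - z p.1 k) ≤ (∑ k, |A p k|) * ε := by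
      rw [Finset.sum_mul]
      refine Finset.sum_le_sum fun k _ => ?_
      have habs : |u k - z p.1 k| ≤ ε := by
        have h1 : |u k - z p.1 k| = dist (u k) (z p.1 k) := (Real.dist_eq _ _).symm
        rw [h1]
        exact (dist_le_pi_dist u (z p.1) k).trans (hzd p.1).le
      calc A p k * (u k - z p.1 k) ≤ |A p k * (u k - z p.1 k)| := le_abs_self _
        _ = |A p k| * |u k - z p.1 k| := abs_mul _ _
        _ ≤ |A p k| * ε := mul_le_mul_of_nonneg_left habs (abs_nonneg _)
    have hsplit : ∑ k, A p k * u k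
        = (∑ k, A p k * z p.1 k) + ∑ k, A p k * (u k - z p.1 k) := by
      rw [← Finset.sum_add_distrib]
      exact Finset.sum_congr rfl fun k _ => by ring
    rw [hsplit]
    linarith
  have h0 : (0 : ℝ) = ∑ p, y p * (∑ k, A p k * u k) := by
    calc (0 : ℝ) = ∑ k : Fin d, (∑ p, y p * A p k) * u k := by
          simp [hker]
      _ = ∑ k : Fin d, ∑ p, y p * A p k * u k := by
          exact Finset.sum_congr rfl fun k _ => by rw [Finset.sum_mul]
      _ = ∑ p, ∑ k, y p * A p k * u k := Finset.sum_comm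
      _ = ∑ p, y p * (∑ k, A p k * u k) := by
          refine Finset.sum_congr rfl fun p _ => ?_
          rw [Finset.mul_sum]
          exact Finset.sum_congr rfl fun k _ => by ring
  have hle : ∑ p, y p * (∑ k, A p k * u k) ≤ S + C * ε := by
    calc ∑ p, y p * (∑ k, A p k * u k)
        ≤ ∑ p, y p * (B p + (∑ k, |A p k|) * ε) :=
          Finset.sum_le_sum fun p _ => mul_le_mul_of_nonneg_left (key p) (hy0 p)
      _ = S + C * ε := by
          rw [hS, hC, Finset.sum_mul, ← Finset.sum_add_distrib]
          exact Finset.sum_congr rfl fun p _ => by ring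
  have hfinal : S + C * ε < 0 := by
    have hd : ε * (2 * (C + 1)) ≤ -S := (le_div_iff₀ (by linarith)).1 hεle
    nlinarith
  linarith
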